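/- Let I ⊂ K[x₁,…,x_n] be an ideal generated by g₁,…,g_s, and let I' be the ideal generated by g'₁,…,g'_s obtained by replacing the coefficients g_{i,α} by g'_{i,α}, where the g'_{i,α} satisfy every polynomial relation over Q that the g_{i,α} satisfy and additionally H_i(g'_{i,α}) ≠ 0 for the finitely many rational functions H_i giving the leading coefficients of a Gröbner basis of I computed by Buchberger's algorithm. Then I and I' have the same ideal of leading terms with respect to the given monomial order, and hence K[x]/I and K[x]/I' have the same Hilbert–Samuel function. -/

import Mathlib

set_option synthInstance.maxHeartbeats 1000000
set_option maxHeartbeats 1000000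

open MvPolynomial

namespace St14

variable {n : ℕ}

/-- The generators built from a family of coefficients. -/
noncomputable def gens {L : Type*} [CommRing L] {s : ℕ} (A : Finset (Fin n →₀ ℕ))
    (c : Fin s × (Fin n →₀ ℕ) → L) : Fin s → MvPolynomial (Fin n) L :=
  fun i => ∑ α ∈ A, MvPolynomial.monomial α (c (i, α))

lemma solvable_transfer {F K : Type*} [Field F] [Field K] (ι : F →+* K)
    {ρ J : Type*} [Fintype ρ] [Fintype J] [DecidableEq ρ] (M : ρ → J → F) (b : ρ → F) :
    (∃ x : J → K, ∀ t, ∑ j, x j * ι (M t j) = ι (b t)) ↔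
    (∃ x : J → F, ∀ t, ∑ j, x j * M t j = b t) := by
  constructor
  · rintro ⟨x, hx⟩
    by_contra hF
    -- b is not in the span of the columns
    have hb : b ∉ Submodule.span F (Set.range fun j => fun t => M t j) := by
      intro hmem
      rw [Submodule.mem_span_range_iff_exists_fun] at hmem
      obtain ⟨c, hc⟩ := hmem
      exact hF ⟨c, fun t => by
        have := congrFun hc t
        simpa [Finset.sum_apply] using this⟩
    obtain ⟨φ, hφ1, hφ2⟩ := Submodule.exists_dual_map_eq_bot_of_notMem hb inferInstance
    have hcol : ∀ j, φ (fun t => M t j) = 0 := by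
      intro j
      have : φ (fun t => M t j) ∈ Submodule.map φ
          (Submodule.span F (Set.range fun j => fun t => M t j)) :=
        Submodule.mem_map_of_mem (Submodule.subset_span ⟨j, rfl⟩)
      rw [hφ2] at this
      simpa using this
    set u : ρ → F := fun t => φ (fun j => if t = j then 1 else 0) with hu
    have hφeq : ∀ y : ρ → F, φ y = ∑ t, y t * u t := by
      intro y
      conv_lhs => rw [pi_eq_sum_univ y]
      rw [map_sum]
      exact Finset.sum_congr rfl fun t _ => by rw [map_smul, smul_eq_mul]
    have hzero : ι (φ b) = 0 := by
      have e1 : ι (φ b) = ∑ t, ι (u t) * ι (b t) := by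
        rw [hφeq b, map_sum]
        exact Finset.sum_congr rfl fun t _ => by rw [map_mul, mul_comm]
      have e2 : ∑ t, ι (u t) * ι (b t) = ∑ j, x j * ι (φ (fun t => M t j)) := by
        calc ∑ t, ι (u t) * ι (b t)
            = ∑ t, ι (u t) * ∑ j, x j * ι (M t j) := by
              exact Finset.sum_congr rfl fun t _ => by rw [hx t]
          _ = ∑ t, ∑ j, x j * (ι (M t j) * ι (u t)) := by
              refine Finset.sum_congr rfl fun t _ => ?_
              rw [Finset.mul_sum]
              exact Finset.sum_congr rfl fun j _ => by ring
          _ = ∑ j, ∑ t, x j * (ι (M t j) * ι (u t)) := Finset.sum_comm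
          _ = ∑ j, x j * ι (φ (fun t => M t j)) := by
              refine Finset.sum_congr rfl fun j _ => ?_
              rw [hφeq, map_sum, ← Finset.mul_sum]
              congr 1
              exact Finset.sum_congr rfl fun t _ => by rw [map_mul]
      rw [e1, e2]
      simp [hcol]
    exact hφ1 (ι.injective (by rw [hzero, map_zero]))
  · rintro ⟨x, hx⟩
    refine ⟨fun j => ι (x j), fun t => ?_⟩
    rw [← hx t, map_sum]
    exact Finset.sum_congr rfl fun j _ => by rw [map_mul]

lemma span_cond_iff {n : ℕ} {L : Type*} [Field L] {J : Type*} [Fintype J]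
    (w : J → MvPolynomial (Fin n) L) (T : Finset (Fin n →₀ ℕ))
    (hT : ∀ j, (w j).support ⊆ T) (Cond : (Fin n →₀ ℕ) → Prop) (μ : Fin n →₀ ℕ) :
    (∃ f ∈ Submodule.span L (Set.range w),
        f.coeff μ = 1 ∧ ∀ t, Cond t → f.coeff t = 0) ↔
    (∃ x : J → L, (∑ j, x j * (w j).coeff μ = 1) ∧
        ∀ t ∈ T, Cond t → ∑ j, x j * (w j).coeff t = 0) := by
  have key : ∀ (x : J → L) (t : Fin n →₀ ℕ),
      (∑ j, x j • w j).coeff t = ∑ j, x j * (w j).coeff t := by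
    intro x t
    rw [MvPolynomial.coeff_sum]
    exact Finset.sum_congr rfl fun j _ => by rw [MvPolynomial.coeff_smul, smul_eq_mul]
  constructor
  · rintro ⟨f, hf, h1, h2⟩
    rw [Submodule.mem_span_range_iff_exists_fun] at hf
    obtain ⟨x, rfl⟩ := hf
    exact ⟨x, by rw [← key]; exact h1, fun t _ ht => by rw [← key]; exact h2 t ht⟩
  · rintro ⟨x, h1, h2⟩
    refine ⟨∑ j, x j • w j, ?_, ?_, ?_⟩
    · exact Submodule.sum_mem _ fun j _ => Submodule.smul_mem _ _ (Submodule.subset_span ⟨j, rfl⟩)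
    · rw [key]; exact h1
    · intro t ht
      by_cases hTt : t ∈ T
      · rw [key]; exact h2 t hTt ht
      · rw [key]
        refine Finset.sum_eq_zero fun j _ => ?_
        have : (w j).coeff t = 0 := by
          by_contra hc
          exact hTt (hT j (MvPolynomial.mem_support_iff.mpr hc))
        rw [this, mul_zero]

lemma span_solutions_transfer {n : ℕ} {F K : Type*} [Field F] [Field K] (ι : F →+* K)
    {J : Type*} [Fintype J] (v : J → MvPolynomial (Fin n) F)
    (Cond : (Fin n →₀ ℕ) → Prop) (μ : Fin n →₀ ℕ) :
    (∃ f ∈ Submodule.span K (Set.range fun j => MvPolynomial.map ι (v j)),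
        f.coeff μ = 1 ∧ ∀ t, Cond t → f.coeff t = 0) ↔
    (∃ f ∈ Submodule.span F (Set.range v),
        f.coeff μ = 1 ∧ ∀ t, Cond t → f.coeff t = 0) := by
  classical
  set T : Finset (Fin n →₀ ℕ) := Finset.univ.sup fun j => (v j).support with hTdef
  have hT : ∀ j, (v j).support ⊆ T := fun j =>
    Finset.le_sup (f := fun j => (v j).support) (Finset.mem_univ j)
  have hTK : ∀ j, (MvPolynomial.map ι (v j)).support ⊆ T := fun j =>
    (MvPolynomial.support_map_subset ι (v j)).trans (hT j)
  haveI : Fintype {t : Fin n →₀ ℕ // t ∈ T ∧ Cond t} :=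
    Fintype.ofFinset (T.filter fun t => Cond t)
      (fun t => by simp [Finset.mem_filter]; rfl)
  rw [span_cond_iff _ T hTK Cond μ, span_cond_iff v T hT Cond μ]
  set ρ := Option {t : Fin n →₀ ℕ // t ∈ T ∧ Cond t} with hρ
  set Mm : ρ → J → F := fun r j => r.elim ((v j).coeff μ) (fun t => (v j).coeff t.1) with hMm
  set bb : ρ → F := fun r => r.elim 1 (fun _ => 0) with hbb
  have key := solvable_transfer ι Mm bb
  constructor
  · rintro ⟨x, h1, h2⟩
    have hsol : ∃ x : J → K, ∀ r, ∑ j, x j * ι (Mm r j) = ι (bb r) := by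
      refine ⟨x, fun r => ?_⟩
      cases r with
      | none => simpa [hMm, hbb, MvPolynomial.coeff_map] using h1
      | some t => simpa [hMm, hbb, MvPolynomial.coeff_map] using h2 t.1 t.2.1 t.2.2
    obtain ⟨y, hy⟩ := key.mp hsol
    refine ⟨y, by simpa [hMm, hbb] using hy none,
      fun t ht hc => by simpa [hMm, hbb] using hy (some ⟨t, ht, hc⟩)⟩
  · rintro ⟨x, h1, h2⟩
    have hsol : ∃ x : J → F, ∀ r, ∑ j, x j * Mm r j = bb r := by
      refine ⟨x, fun r => ?_⟩
      cases r with
      | none => simpa [hMm, hbb] using h1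
      | some t => simpa [hMm, hbb] using h2 t.1 t.2.1 t.2.2
    obtain ⟨y, hy⟩ := key.mpr hsol
    refine ⟨y, by simpa [hMm, hbb, MvPolynomial.coeff_map] using hy none,
      fun t ht hc => by simpa [hMm, hbb, MvPolynomial.coeff_map] using hy (some ⟨t, ht, hc⟩)⟩

lemma ideal_mem_iff {n : ℕ} {L : Type*} [Field L] {s : ℕ} (A : Finset (Fin n →₀ ℕ))
    (c : Fin s × (Fin n →₀ ℕ) → L) (f : MvPolynomial (Fin n) L) :
    f ∈ Ideal.span (Set.range (gens A c)) ↔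
    ∃ B : Finset (Fin n →₀ ℕ),
      f ∈ Submodule.span L (Set.range fun p : Fin s × {β // β ∈ B} =>
        (MvPolynomial.monomial (p.2 : Fin n →₀ ℕ) 1 : MvPolynomial (Fin n) L) * gens A c p.1) := by
  classical
  constructor
  · intro hf
    rw [Ideal.mem_span_range_iff_exists_fun] at hf
    obtain ⟨h, rfl⟩ := hf
    refine ⟨Finset.univ.sup fun i => (h i).support, ?_⟩
    set B := Finset.univ.sup fun i => (h i).support with hB
    have hsupp : ∀ i, (h i).support ⊆ B := fun i =>
      Finset.le_sup (f := fun i => (h i).support) (Finset.mem_univ i)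
    have hdecomp : ∀ i, h i * gens A c i =
        ∑ β : {β // β ∈ B}, (h i).coeff β.1 •
          ((MvPolynomial.monomial (β : Fin n →₀ ℕ) 1 : MvPolynomial (Fin n) L) * gens A c i) := by
      intro i
      have e1 : h i = ∑ β ∈ B, MvPolynomial.monomial β ((h i).coeff β) := by
        conv_lhs => rw [(h i).as_sum]
        exact Finset.sum_subset (hsupp i)
          (fun β _ hβ => by rw [MvPolynomial.notMem_support_iff.mp hβ, map_zero])
      have e2 : h i = ∑ β : {β // β ∈ B}, (h i).coeff β.1 •
          (MvPolynomial.monomial (β : Fin n →₀ ℕ) 1 : MvPolynomial (Fin n) L) := by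
        conv_lhs => rw [e1]
        rw [Finset.sum_coe_sort B (fun β => (h i).coeff β •
          (MvPolynomial.monomial β 1 : MvPolynomial (Fin n) L))]
        exact Finset.sum_congr rfl fun β _ => by
          rw [MvPolynomial.smul_monomial, smul_eq_mul, mul_one]
      conv_lhs => rw [e2]
      rw [Finset.sum_mul]
      exact Finset.sum_congr rfl fun β _ => smul_mul_assoc _ _ _
    have e3 : (∑ i, h i * gens A c i) = ∑ p : Fin s × {β // β ∈ B},
        (h p.1).coeff p.2.1 • ((MvPolynomial.monomial (p.2 : Fin n →₀ ℕ) 1 :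
          MvPolynomial (Fin n) L) * gens A c p.1) := by
      rw [Fintype.sum_prod_type]
      exact Finset.sum_congr rfl fun i _ => hdecomp i
    rw [e3]
    exact Submodule.sum_mem _ fun p _ =>
      Submodule.smul_mem _ _ (Submodule.subset_span ⟨p, rfl⟩)
  · rintro ⟨B, hf⟩
    have : Submodule.span L (Set.range fun p : Fin s × {β // β ∈ B} =>
        (MvPolynomial.monomial (p.2 : Fin n →₀ ℕ) 1 : MvPolynomial (Fin n) L) * gens A c p.1) ≤
        Submodule.restrictScalars L (Ideal.span (Set.range (gens A c))) := by
      rw [Submodule.span_le]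
      rintro q ⟨p, rfl⟩
      exact Ideal.mul_mem_left _ _ (Ideal.subset_span ⟨p.1, rfl⟩)
    exact this hf

lemma map_gens {n : ℕ} {F K : Type*} [Field F] [Field K] (ι : F →+* K) {s : ℕ}
    (A : Finset (Fin n →₀ ℕ)) (c : Fin s × (Fin n →₀ ℕ) → F) (i : Fin s) :
    MvPolynomial.map ι (gens A c i) = gens A (fun p => ι (c p)) i := by
  unfold gens
  rw [map_sum]
  exact Finset.sum_congr rfl fun α _ => by rw [MvPolynomial.map_monomial]

lemma cond_transfer {n : ℕ} {F K : Type*} [Field F] [Field K] (ι : F →+* K) {s : ℕ}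
    (A : Finset (Fin n →₀ ℕ)) (c : Fin s × (Fin n →₀ ℕ) → F)
    (Cond : (Fin n →₀ ℕ) → Prop) (μ : Fin n →₀ ℕ) :
    (∃ f ∈ Ideal.span (Set.range (gens A fun p => ι (c p))),
        f.coeff μ = 1 ∧ ∀ t, Cond t → f.coeff t = 0) ↔
    (∃ f ∈ Ideal.span (Set.range (gens A c)),
        f.coeff μ = 1 ∧ ∀ t, Cond t → f.coeff t = 0) := by
  classical
  have lhs : (∃ f ∈ Ideal.span (Set.range (gens A fun p => ι (c p))),
        f.coeff μ = 1 ∧ ∀ t, Cond t → f.coeff t = 0) ↔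
      ∃ B : Finset (Fin n →₀ ℕ), ∃ f ∈ Submodule.span K
        (Set.range fun p : Fin s × {β // β ∈ B} =>
          (MvPolynomial.monomial (p.2 : Fin n →₀ ℕ) 1 : MvPolynomial (Fin n) K) *
            gens A (fun p => ι (c p)) p.1),
        f.coeff μ = 1 ∧ ∀ t, Cond t → f.coeff t = 0 := by
    constructor
    · rintro ⟨f, hf, hgood⟩
      obtain ⟨B, hB⟩ := (ideal_mem_iff A _ f).mp hf
      exact ⟨B, f, hB, hgood⟩
    · rintro ⟨B, f, hB, hgood⟩
      exact ⟨f, (ideal_mem_iff A _ f).mpr ⟨B, hB⟩, hgood⟩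
  have rhs : (∃ f ∈ Ideal.span (Set.range (gens A c)),
        f.coeff μ = 1 ∧ ∀ t, Cond t → f.coeff t = 0) ↔
      ∃ B : Finset (Fin n →₀ ℕ), ∃ f ∈ Submodule.span F
        (Set.range fun p : Fin s × {β // β ∈ B} =>
          (MvPolynomial.monomial (p.2 : Fin n →₀ ℕ) 1 : MvPolynomial (Fin n) F) *
            gens A c p.1),
        f.coeff μ = 1 ∧ ∀ t, Cond t → f.coeff t = 0 := by
    constructor
    · rintro ⟨f, hf, hgood⟩
      obtain ⟨B, hB⟩ := (ideal_mem_iff A _ f).mp hf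
      exact ⟨B, f, hB, hgood⟩
    · rintro ⟨B, f, hB, hgood⟩
      exact ⟨f, (ideal_mem_iff A _ f).mpr ⟨B, hB⟩, hgood⟩
  rw [lhs, rhs]
  refine exists_congr fun B => ?_
  have := span_solutions_transfer ι
    (v := fun p : Fin s × {β // β ∈ B} =>
      (MvPolynomial.monomial (p.2 : Fin n →₀ ℕ) 1 : MvPolynomial (Fin n) F) * gens A c p.1)
    Cond μ
  rw [← this]
  have : (fun p : Fin s × {β // β ∈ B} => MvPolynomial.map ι
      ((MvPolynomial.monomial (p.2 : Fin n →₀ ℕ) 1 : MvPolynomial (Fin n) F) * gens A c p.1)) =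
      (fun p : Fin s × {β // β ∈ B} =>
        (MvPolynomial.monomial (p.2 : Fin n →₀ ℕ) 1 : MvPolynomial (Fin n) K) *
          gens A (fun p => ι (c p)) p.1) := by
    funext p
    rw [map_mul, MvPolynomial.map_monomial, map_one, map_gens]
  rw [this]


section Order

attribute [-instance] Finsupp.instLE Finsupp.preorder Finsupp.partialorder
  Finsupp.semilatticeInf Finsupp.semilatticeSup Finsupp.lattice
  Finsupp.orderBot

variable [LinearOrder (Fin n →₀ ℕ)]

lemma max_support_iff {L : Type*} [Field L] (f : MvPolynomial (Fin n) L) (μ : Fin n →₀ ℕ) :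
    f.support.max = (μ : WithBot (Fin n →₀ ℕ)) ↔
    f.coeff μ ≠ 0 ∧ ∀ t, μ < t → f.coeff t = 0 := by
  constructor
  · intro h
    refine ⟨MvPolynomial.mem_support_iff.mp (Finset.mem_of_max h), fun t ht => ?_⟩
    by_contra hc
    have := Finset.le_max (MvPolynomial.mem_support_iff.mpr hc)
    rw [h] at this
    exact absurd (WithBot.coe_le_coe.mp this) (not_le.mpr ht)
  · rintro ⟨h1, h2⟩
    refine le_antisymm (Finset.max_le fun t ht => ?_)
      (Finset.le_max (MvPolynomial.mem_support_iff.mpr h1))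
    rcases le_or_gt t μ with h | h
    · exact WithBot.coe_le_coe.mpr h
    · exact absurd (h2 t h) (MvPolynomial.mem_support_iff.mp ht)

lemma bridge {L : Type*} [Field L] (I : Ideal (MvPolynomial (Fin n) L))
    (μ : Fin n →₀ ℕ) (Q : (Fin n →₀ ℕ) → Prop) :
    (∃ f ∈ I, (∀ t ∈ f.support, ¬ Q t) ∧ f.support.max = (μ : WithBot (Fin n →₀ ℕ))) ↔
    (∃ f ∈ I, f.coeff μ = 1 ∧ ∀ t, (μ < t ∨ Q t) → f.coeff t = 0) := by
  constructor
  · rintro ⟨f, hf, hQ, hmax⟩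
    obtain ⟨h1, h2⟩ := (max_support_iff f μ).mp hmax
    refine ⟨MvPolynomial.C (f.coeff μ)⁻¹ * f, I.mul_mem_left _ hf, ?_, ?_⟩
    · rw [MvPolynomial.coeff_C_mul, inv_mul_cancel₀ h1]
    · rintro t (ht | ht)
      · rw [MvPolynomial.coeff_C_mul, h2 t ht, mul_zero]
      · rw [MvPolynomial.coeff_C_mul,
          MvPolynomial.notMem_support_iff.mp (fun hs => hQ t hs ht), mul_zero]
  · rintro ⟨f, hf, h1, h2⟩
    refine ⟨f, hf, fun t hts htQ => ?_, (max_support_iff f μ).mpr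
      ⟨by rw [h1]; exact one_ne_zero, fun t ht => h2 t (Or.inl ht)⟩⟩
    exact MvPolynomial.mem_support_iff.mp hts (h2 t (Or.inr htQ))

lemma finrank_eq_ncard_LM {L : Type*} [Field L] (T : Finset (Fin n →₀ ℕ))
    (W : Submodule L (MvPolynomial (Fin n) L)) (hW : ∀ f ∈ W, f.support ⊆ T) :
    Module.finrank L ↥W =
      Set.ncard {μ : Fin n →₀ ℕ | ∃ f ∈ W, f.support.max = (μ : WithBot (Fin n →₀ ℕ))} := by
  classical
  induction T using Finset.strongInduction generalizing W with
  | _ T ih =>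
  rcases T.eq_empty_or_nonempty with rfl | hne
  · have hbot : W = ⊥ := by
      rw [eq_bot_iff]
      intro f hf
      have := hW f hf
      rw [Finset.subset_empty] at this
      simpa using MvPolynomial.support_eq_empty.mp this
    subst hbot
    rw [finrank_bot]
    have hset : {μ : Fin n →₀ ℕ | ∃ f ∈ (⊥ : Submodule L (MvPolynomial (Fin n) L)),
        f.support.max = (μ : WithBot (Fin n →₀ ℕ))} = ∅ := by
      ext μ
      simp only [Set.mem_setOf_eq, Set.mem_empty_iff_false, iff_false, not_exists]
      rintro f ⟨hf, hmax⟩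
      rw [Submodule.mem_bot] at hf
      subst hf
      simp only [MvPolynomial.support_zero, Finset.max_empty] at hmax
      exact absurd hmax (by simp)
    rw [hset, Set.ncard_empty]
  · set t := T.max' hne with ht
    -- the evaluation functional
    have hfd : FiniteDimensional L (restrictSupport L (↑T : Set (Fin n →₀ ℕ))) :=
      Module.Finite.of_basis (basisRestrictSupport L _)
    have hWle : W ≤ restrictSupport L (↑T : Set (Fin n →₀ ℕ)) := by
      intro f hf
      rw [restrictSupport, AddMonoidAlgebra.mem_supported]
      exact fun x hx => hW f hf hx
    haveI : FiniteDimensional L ↥W := Submodule.finiteDimensional_of_le hWle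
    set φ : ↥W →ₗ[L] L := (MvPolynomial.lcoeff L t).domRestrict W with hφ
    set W' : Submodule L (MvPolynomial (Fin n) L) :=
      W ⊓ LinearMap.ker (MvPolynomial.lcoeff L t) with hW'
    have hW'le : W' ≤ W := inf_le_left
    have hW'supp : ∀ f ∈ W', f.support ⊆ T.erase t := by
      rintro f ⟨hf1, hf2⟩ x hx
      rw [Finset.mem_erase]
      refine ⟨?_, hW f hf1 hx⟩
      rintro rfl
      exact (MvPolynomial.mem_support_iff.mp hx) hf2
    have hker : LinearMap.ker φ = Submodule.comap W.subtype W' := by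
      ext x
      simp only [hφ, LinearMap.mem_ker, LinearMap.domRestrict_apply, Submodule.mem_comap,
        hW', Submodule.mem_inf, Submodule.coe_subtype]
      exact ⟨fun h => ⟨x.2, h⟩, fun h => h.2⟩
    have hkerrank : Module.finrank L ↥(LinearMap.ker φ) = Module.finrank L ↥W' := by
      rw [hker]
      have e := Submodule.comapSubtypeEquivOfLe hW'le
      exact e.finrank_eq
    have hrn := LinearMap.finrank_range_add_finrank_ker φ
    have hLM' : {μ : Fin n →₀ ℕ | ∃ f ∈ W', f.support.max = (μ : WithBot (Fin n →₀ ℕ))} =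
        {μ : Fin n →₀ ℕ | ∃ f ∈ W, f.support.max = (μ : WithBot (Fin n →₀ ℕ))} \ {t} := by
      ext μ
      simp only [Set.mem_setOf_eq, Set.mem_diff, Set.mem_singleton_iff]
      constructor
      · rintro ⟨f, hf, hmax⟩
        refine ⟨⟨f, hW'le hf, hmax⟩, ?_⟩
        rintro rfl
        have htsupp : t ∈ f.support := Finset.mem_of_max hmax
        exact (MvPolynomial.mem_support_iff.mp htsupp) hf.2
      · rintro ⟨⟨f, hf, hmax⟩, hμt⟩
        refine ⟨f, ⟨hf, ?_⟩, hmax⟩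
        rw [SetLike.mem_coe, LinearMap.mem_ker, MvPolynomial.lcoeff_apply]
        by_contra hc
        have htsupp : t ∈ f.support := MvPolynomial.mem_support_iff.mpr hc
        have h1 : (t : WithBot (Fin n →₀ ℕ)) ≤ (μ : WithBot (Fin n →₀ ℕ)) := by
          rw [← hmax]; exact Finset.le_max htsupp
        have h2 : μ ≤ t := by
          have hμsupp : μ ∈ f.support := Finset.mem_of_max hmax
          exact Finset.le_max' T μ (hW f hf hμsupp)
        exact hμt (le_antisymm h2 (WithBot.coe_le_coe.mp h1))
    have hLMfin : ({μ : Fin n →₀ ℕ | ∃ f ∈ W,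
        f.support.max = (μ : WithBot (Fin n →₀ ℕ))}).Finite := by
      apply Set.Finite.subset T.finite_toSet
      rintro μ ⟨f, hf, hmax⟩
      exact hW f hf (Finset.mem_of_max hmax)
    have ihW' := ih (T.erase t) (Finset.erase_ssubset (T.max'_mem hne)) W' hW'supp
    by_cases hzero : φ = 0
    · have hW'W : W' = W := by
        refine le_antisymm hW'le fun f hf => ⟨hf, ?_⟩
        have := congrFun (congrArg DFunLike.coe hzero) ⟨f, hf⟩
        simpa [hφ, MvPolynomial.lcoeff_apply] using this
      have htnot : t ∉ {μ : Fin n →₀ ℕ | ∃ f ∈ W,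
          f.support.max = (μ : WithBot (Fin n →₀ ℕ))} := by
        rintro ⟨f, hf, hmax⟩
        have := Finset.mem_of_max hmax
        rw [MvPolynomial.mem_support_iff] at this
        have h0 : φ ⟨f, hf⟩ = 0 := by rw [hzero]; rfl
        exact this (by simpa [hφ, MvPolynomial.lcoeff_apply] using h0)
      have hr0 : Module.finrank L ↥(LinearMap.range φ) = 0 := by
        rw [hzero, LinearMap.range_zero, finrank_bot]
      have hfin : Module.finrank L ↥W = Set.ncard ({μ : Fin n →₀ ℕ | ∃ f ∈ W,
          f.support.max = (μ : WithBot (Fin n →₀ ℕ))} \ {t}) := by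
        rw [← hrn, hr0, zero_add, hkerrank, ihW', hLM']
      rw [hfin, Set.diff_singleton_eq_self htnot]
    · have hrange : LinearMap.range φ = ⊤ := by
        rcases Ideal.eq_bot_or_top (LinearMap.range φ) with h | h
        · exact absurd (LinearMap.range_eq_bot.mp h) hzero
        · exact h
      have h1 : Module.finrank L ↥(LinearMap.range φ) = 1 := by
        rw [hrange, finrank_top, Module.finrank_self]
      have htin : t ∈ {μ : Fin n →₀ ℕ | ∃ f ∈ W,
          f.support.max = (μ : WithBot (Fin n →₀ ℕ))} := by
        have : ∃ x : ↥W, φ x ≠ 0 := by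
          by_contra hall
          push_neg at hall
          exact hzero (by ext x; simp [hall x])
        obtain ⟨⟨f, hf⟩, hfx⟩ := this
        rw [hφ] at hfx
        simp only [LinearMap.domRestrict_apply, MvPolynomial.lcoeff_apply] at hfx
        refine ⟨f, hf, ?_⟩
        have htsupp : t ∈ f.support := MvPolynomial.mem_support_iff.mpr hfx
        refine le_antisymm (Finset.max_le fun b hb => WithBot.coe_le_coe.mpr ?_)
          (Finset.le_max htsupp)
        exact Finset.le_max' T b (hW f hf hb)
      have hfin : Module.finrank L ↥W = 1 + Set.ncard ({μ : Fin n →₀ ℕ | ∃ f ∈ W,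
          f.support.max = (μ : WithBot (Fin n →₀ ℕ))} \ {t}) := by
        rw [← hrn, h1, hkerrank, ihW', hLM']
      rw [hfin, ← Set.ncard_diff_singleton_add_one htin hLMfin, add_comm]

/-- Transfer of the existence of elements with prescribed leading monomial (and a support
condition `Q`) along a field embedding `ι`, for ideals generated by `gens`. -/
lemma LM_transfer {F K : Type*} [Field F] [Field K] (ι : F →+* K) {s : ℕ}
    (A : Finset (Fin n →₀ ℕ)) (c : Fin s × (Fin n →₀ ℕ) → F)
    (Q : (Fin n →₀ ℕ) → Prop) (μ : Fin n →₀ ℕ) :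
    (∃ f ∈ Ideal.span (Set.range (gens A fun p => ι (c p))),
        (∀ t ∈ f.support, ¬ Q t) ∧ f.support.max = (μ : WithBot (Fin n →₀ ℕ))) ↔
    (∃ f ∈ Ideal.span (Set.range (gens A c)),
        (∀ t ∈ f.support, ¬ Q t) ∧ f.support.max = (μ : WithBot (Fin n →₀ ℕ))) := by
  rw [bridge, bridge]
  exact cond_transfer ι A c (fun t => μ < t ∨ Q t) μ

end Order

end St14

section

variable {K : Type*} [Field K] [CharZero K] {n : ℕ} [LinearOrder (Fin n →₀ ℕ)]

/-- The ideal of leading terms of an ideal `I ⊆ K[x₁,…,x_n]` with respect to a given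
(linear) monomial order on the exponents. -/
noncomputable def leadTermIdeal (I : Ideal (MvPolynomial (Fin n) K)) :
    Ideal (MvPolynomial (Fin n) K) :=
  Ideal.span {q | ∃ f ∈ I, f ≠ 0 ∧ ∃ m : Fin n →₀ ℕ,
    f.support.max = (m : WithBot (Fin n →₀ ℕ)) ∧
    q = MvPolynomial.monomial m (f.coeff m)}

/-- The Hilbert–Samuel function of `K[x]/I`: the dimension of the image of the space of
polynomials of total degree at most `m` in the quotient `K[x]/I`. -/
noncomputable def hilbertSamuel (I : Ideal (MvPolynomial (Fin n) K)) (m : ℕ) : Cardinal :=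
  Module.rank K ↥(Submodule.map (Ideal.Quotient.mkₐ K I).toLinearMap
    (MvPolynomial.restrictTotalDegree (Fin n) K m))

namespace St14

lemma leadTermIdeal_le (I I' : Ideal (MvPolynomial (Fin n) K))
    (h : ∀ μ : Fin n →₀ ℕ,
      (∃ f ∈ I, f.support.max = (μ : WithBot (Fin n →₀ ℕ))) →
      (∃ f ∈ I', f.support.max = (μ : WithBot (Fin n →₀ ℕ)))) :
    leadTermIdeal I ≤ leadTermIdeal I' := by
  simp only [leadTermIdeal]
  rw [Ideal.span_le]
  rintro q ⟨f, hf, hf0, μ, hmax, rfl⟩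
  rw [SetLike.mem_coe]
  obtain ⟨g, hg, hgmax⟩ := h μ ⟨f, hf, hmax⟩
  have hgc : g.coeff μ ≠ 0 := MvPolynomial.mem_support_iff.mp (Finset.mem_of_max hgmax)
  have hg0 : g ≠ 0 := by
    intro hz
    rw [hz] at hgc
    exact hgc (MvPolynomial.coeff_zero μ)
  have : (MvPolynomial.monomial μ (f.coeff μ) : MvPolynomial (Fin n) K) =
      MvPolynomial.C (f.coeff μ / g.coeff μ) * MvPolynomial.monomial μ (g.coeff μ) := by
    rw [MvPolynomial.C_mul_monomial, div_mul_cancel₀ _ hgc]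
  rw [this]
  have hmem : (MvPolynomial.monomial μ (g.coeff μ) : MvPolynomial (Fin n) K) ∈
      {q | ∃ f ∈ I', f ≠ 0 ∧ ∃ m : Fin n →₀ ℕ,
        f.support.max = (m : WithBot (Fin n →₀ ℕ)) ∧
        q = MvPolynomial.monomial m (f.coeff m)} := ⟨g, hg, hg0, μ, hgmax, rfl⟩
  exact Ideal.mul_mem_left _ _ (Ideal.subset_span hmem)

lemma leadTermIdeal_eq (I I' : Ideal (MvPolynomial (Fin n) K))
    (h : ∀ μ : Fin n →₀ ℕ,
      (∃ f ∈ I, f.support.max = (μ : WithBot (Fin n →₀ ℕ))) ↔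
      (∃ f ∈ I', f.support.max = (μ : WithBot (Fin n →₀ ℕ)))) :
    leadTermIdeal I = leadTermIdeal I' :=
  le_antisymm (leadTermIdeal_le I I' fun μ => (h μ).mp)
    (leadTermIdeal_le I' I fun μ => (h μ).mpr)

lemma hilbertSamuel_eq (I : Ideal (MvPolynomial (Fin n) K)) (m : ℕ) :
    hilbertSamuel I m =
      ((Nat.card {d : Fin n →₀ ℕ // (d.sum fun _ e => e) ≤ m}) -
        Set.ncard {μ : Fin n →₀ ℕ | ∃ f ∈ I,
          (∀ t ∈ f.support, ¬ m < (t.sum fun _ e => e)) ∧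
          f.support.max = (μ : WithBot (Fin n →₀ ℕ))} : ℕ) := by
  classical
  set p := MvPolynomial.restrictTotalDegree (Fin n) K m with hp
  set g := ((Ideal.Quotient.mkₐ K I).toLinearMap).domRestrict p with hg
  have hrange : Submodule.map (Ideal.Quotient.mkₐ K I).toLinearMap p = LinearMap.range g := by
    rw [hg, LinearMap.range_domRestrict]
  haveI hfd : FiniteDimensional K ↥p := by infer_instance
  have hrk : hilbertSamuel I m = (Module.finrank K ↥(LinearMap.range g) : Cardinal) := by
    rw [hilbertSamuel, hrange, Module.finrank_eq_rank]
  set W : Submodule K (MvPolynomial (Fin n) K) := (Submodule.restrictScalars K I) ⊓ p with hW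
  have hker : LinearMap.ker g = Submodule.comap p.subtype W := by
    ext x
    simp only [hg, LinearMap.mem_ker, LinearMap.domRestrict_apply, AlgHom.toLinearMap_apply,
      Ideal.Quotient.mkₐ_eq_mk, Submodule.mem_comap, Submodule.mem_inf, Submodule.coe_subtype,
      Submodule.restrictScalars_mem]
    rw [Ideal.Quotient.eq_zero_iff_mem]
    exact ⟨fun h => ⟨h, x.2⟩, fun h => h.1⟩
  have hkerrank : Module.finrank K ↥(LinearMap.ker g) = Module.finrank K ↥W := by
    rw [hker]
    exact (Submodule.comapSubtypeEquivOfLe (inf_le_right : W ≤ p)).finrank_eq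
  have hrn := LinearMap.finrank_range_add_finrank_ker g
  -- the degree set is finite
  have hfinite : ({d : Fin n →₀ ℕ | (d.sum fun _ e => e) ≤ m}).Finite := by
    have h1 : ({f : Fin n →₀ ℕ | ∀ a, f a ≤ m}).Finite :=
      ((Set.Finite.pi' fun _ ↦ Set.finite_le_nat _).preimage DFunLike.coe_injective.injOn)
    refine h1.subset fun d hd i => ?_
    rcases eq_or_ne (d i) 0 with h | h
    · simp [h]
    · exact le_trans (Finset.single_le_sum (fun _ _ => Nat.zero_le _)
        (Finsupp.mem_support_iff.mpr h)) hd
  -- finrank of p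
  have hfp : Module.finrank K ↥p = Nat.card {d : Fin n →₀ ℕ // (d.sum fun _ e => e) ≤ m} := by
    haveI inst1 : Fintype ↥{d : Fin n →₀ ℕ | (d.sum fun _ e => e) ≤ m} := hfinite.fintype
    haveI inst2 : Fintype {d : Fin n →₀ ℕ // (d.sum fun _ e => e) ≤ m} := inst1
    have hpr : p = MvPolynomial.restrictSupport K {d : Fin n →₀ ℕ | (d.sum fun _ e => e) ≤ m} :=
      rfl
    rw [hpr, Module.finrank_eq_card_basis (MvPolynomial.basisRestrictSupport K _)]
    exact Nat.card_eq_fintype_card.symm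
  -- finrank of W via LM
  have hWsupp : ∀ f ∈ W, f.support ⊆ hfinite.toFinset := by
    intro f hf x hx
    rw [Set.Finite.mem_toFinset]
    have hfp2 : f ∈ p := hf.2
    rw [hp, MvPolynomial.mem_restrictTotalDegree] at hfp2
    exact le_trans (MvPolynomial.le_totalDegree hx) hfp2
  have hfW := finrank_eq_ncard_LM hfinite.toFinset W hWsupp
  have hsetEq : {μ : Fin n →₀ ℕ | ∃ f ∈ W, f.support.max = (μ : WithBot (Fin n →₀ ℕ))} =
      {μ : Fin n →₀ ℕ | ∃ f ∈ I,
        (∀ t ∈ f.support, ¬ m < (t.sum fun _ e => e)) ∧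
        f.support.max = (μ : WithBot (Fin n →₀ ℕ))} := by
    ext μ
    simp only [Set.mem_setOf_eq]
    constructor
    · rintro ⟨f, hf, hmax⟩
      refine ⟨f, hf.1, fun t ht => ?_, hmax⟩
      have hfp2 : f ∈ p := hf.2
      rw [hp, MvPolynomial.mem_restrictTotalDegree] at hfp2
      exact Nat.not_lt.mpr (le_trans (MvPolynomial.le_totalDegree ht) hfp2)
    · rintro ⟨f, hf, hdeg, hmax⟩
      refine ⟨f, Submodule.mem_inf.mpr ⟨hf, ?_⟩, hmax⟩
      rw [hp, MvPolynomial.mem_restrictTotalDegree]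
      show f.support.sup (fun s => s.sum fun _ e => e) ≤ m
      exact Finset.sup_le fun t ht => Nat.not_lt.mp (hdeg t ht)
  rw [hsetEq] at hfW
  rw [hrk]
  congr 1
  omega

end St14

/-- Let `I = (g₁,…,g_s)` and let `I' = (g'₁,…,g'_s)` be obtained by replacing
the coefficients `g_{i,α}` by new coefficients `g'_{i,α}` which satisfy exactly the same
polynomial relations over ℚ as the `g_{i,α}` (in particular every relation satisfied by the
`g_{i,α}` holds for the `g'_{i,α}`, and the finitely many nonvanishing conditions coming from
the leading coefficients in Buchberger's algorithm are preserved).  Then, for a given monomial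
order (a linear order on exponents compatible with addition and with `0` least), `I` and `I'`
have the same ideal of leading terms, and hence the same Hilbert–Samuel function. -/
theorem statement14 {s : ℕ}
    (hmono : ∀ a b c : Fin n →₀ ℕ, a ≤ b → a + c ≤ b + c)
    (hbot : ∀ a : Fin n →₀ ℕ, 0 ≤ a)
    (A : Finset (Fin n →₀ ℕ)) (a a' : Fin s × (Fin n →₀ ℕ) → K)
    (hrel : ∀ f : MvPolynomial (Fin s × (Fin n →₀ ℕ)) ℚ,
      MvPolynomial.aeval a f = 0 ↔ MvPolynomial.aeval a' f = 0) :
    leadTermIdeal (Ideal.span (Set.range fun i : Fin s =>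
        ∑ α ∈ A, MvPolynomial.monomial α (a (i, α)))) =
      leadTermIdeal (Ideal.span (Set.range fun i : Fin s =>
        ∑ α ∈ A, MvPolynomial.monomial α (a' (i, α)))) ∧
    ∀ m : ℕ,
      hilbertSamuel (Ideal.span (Set.range fun i : Fin s =>
        ∑ α ∈ A, MvPolynomial.monomial α (a (i, α)))) m =
      hilbertSamuel (Ideal.span (Set.range fun i : Fin s =>
        ∑ α ∈ A, MvPolynomial.monomial α (a' (i, α)))) m := by
  classical
  -- the two ring homomorphisms from the polynomial ring in the coefficients
  set φ : MvPolynomial (Fin s × (Fin n →₀ ℕ)) ℚ →+* K :=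
    (MvPolynomial.aeval a : MvPolynomial (Fin s × (Fin n →₀ ℕ)) ℚ →ₐ[ℚ] K).toRingHom with hφ
  set φ' : MvPolynomial (Fin s × (Fin n →₀ ℕ)) ℚ →+* K :=
    (MvPolynomial.aeval a' : MvPolynomial (Fin s × (Fin n →₀ ℕ)) ℚ →ₐ[ℚ] K).toRingHom with hφ'
  have hker : RingHom.ker φ = RingHom.ker φ' := by
    ext f
    rw [RingHom.mem_ker, RingHom.mem_ker]
    exact hrel f
  haveI hprime : (RingHom.ker φ).IsPrime := RingHom.ker_isPrime φ
  -- the common integral domain of coefficients and its fraction field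
  set D := MvPolynomial (Fin s × (Fin n →₀ ℕ)) ℚ ⧸ RingHom.ker φ with hD
  set ψ : D →+* K := RingHom.kerLift φ with hψ
  set ψ' : D →+* K :=
    (RingHom.kerLift φ').comp (Ideal.quotEquivOfEq hker).toRingHom with hψ'
  have hψinj : Function.Injective ψ := RingHom.kerLift_injective φ
  have hψ'inj : Function.Injective ψ' :=
    (RingHom.kerLift_injective φ').comp (Ideal.quotEquivOfEq hker).injective
  set F := FractionRing D with hF
  set ι : F →+* K := IsFractionRing.lift hψinj with hι
  set ι' : F →+* K := IsFractionRing.lift hψ'inj with hι'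
  set c : Fin s × (Fin n →₀ ℕ) → F := fun p =>
    algebraMap D F (Ideal.Quotient.mk (RingHom.ker φ) (MvPolynomial.X p)) with hc
  have ha : ∀ p, ι (c p) = a p := by
    intro p
    rw [hc, hι, IsFractionRing.lift_algebraMap, hψ, RingHom.kerLift_mk]
    exact MvPolynomial.aeval_X a p
  have ha' : ∀ p, ι' (c p) = a' p := by
    intro p
    rw [hc, hι', IsFractionRing.lift_algebraMap, hψ', RingHom.comp_apply]
    rw [RingEquiv.toRingHom_eq_coe, RingEquiv.coe_toRingHom, Ideal.quotEquivOfEq_mk,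
      RingHom.kerLift_mk]
    exact MvPolynomial.aeval_X a' p
  have hge : (fun i : Fin s => ∑ α ∈ A, MvPolynomial.monomial α (a (i, α))) =
      St14.gens A (fun p => ι (c p)) := by
    funext i
    rw [St14.gens]
    exact Finset.sum_congr rfl fun α _ => by rw [ha]
  have hge' : (fun i : Fin s => ∑ α ∈ A, MvPolynomial.monomial α (a' (i, α))) =
      St14.gens A (fun p => ι' (c p)) := by
    funext i
    rw [St14.gens]
    exact Finset.sum_congr rfl fun α _ => by rw [ha']
  have key : ∀ (Q : (Fin n →₀ ℕ) → Prop) (μ : Fin n →₀ ℕ),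
      (∃ f ∈ Ideal.span (Set.range fun i : Fin s =>
          ∑ α ∈ A, MvPolynomial.monomial α (a (i, α))),
        (∀ t ∈ f.support, ¬ Q t) ∧ f.support.max = (μ : WithBot (Fin n →₀ ℕ))) ↔
      (∃ f ∈ Ideal.span (Set.range fun i : Fin s =>
          ∑ α ∈ A, MvPolynomial.monomial α (a' (i, α))),
        (∀ t ∈ f.support, ¬ Q t) ∧ f.support.max = (μ : WithBot (Fin n →₀ ℕ))) := by
    intro Q μ
    rw [hge, hge']
    exact (St14.LM_transfer ι A c Q μ).trans (St14.LM_transfer ι' A c Q μ).symm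
  constructor
  · apply St14.leadTermIdeal_eq
    intro μ
    have h := key (fun _ => False) μ
    simpa using h
  · intro m
    rw [St14.hilbertSamuel_eq, St14.hilbertSamuel_eq]
    have hsets : {μ : Fin n →₀ ℕ | ∃ f ∈ Ideal.span (Set.range fun i : Fin s =>
          ∑ α ∈ A, MvPolynomial.monomial α (a (i, α))),
        (∀ t ∈ f.support, ¬ m < (t.sum fun _ e => e)) ∧
        f.support.max = (μ : WithBot (Fin n →₀ ℕ))} =
        {μ : Fin n →₀ ℕ | ∃ f ∈ Ideal.span (Set.range fun i : Fin s =>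
          ∑ α ∈ A, MvPolynomial.monomial α (a' (i, α))),
        (∀ t ∈ f.support, ¬ m < (t.sum fun _ e => e)) ∧
        f.support.max = (μ : WithBot (Fin n →₀ ℕ))} := by
      ext μ
      exact key (fun t => m < (t.sum fun _ e => e)) μ
    rw [hsets]

end
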